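/- If (A, ≺) is a well-order of ordinal type λ ≥ 2, then the ShortLex order on finite sequences over A is a well-order of ordinal type λ^ω (ordinal exponentiation). -/

import Mathlib

open Ordinal

namespace Stmt16Aux

variable {A : Type*} [LinearOrder A] [IsWellOrder A (· < ·)]

noncomputable abbrev lam (A : Type*) [LinearOrder A] [IsWellOrder A (· < ·)] : Ordinal :=
  Ordinal.type ((· < ·) : A → A → Prop)

/-- lex rank within a length class -/
noncomputable def g : List A → Ordinal
  | [] => 0
  | a :: l => lam A ^ l.length * Ordinal.typein (· < ·) a + g l

theorem g_lt (l : List A) : g l < lam A ^ l.length := by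
  induction l with
  | nil => simp [g]
  | cons a l ih =>
      have h1 : g (a :: l) < lam A ^ l.length * Order.succ (Ordinal.typein (· < ·) a) := by
        rw [Ordinal.mul_succ]
        exact add_lt_add_right ih _
      have h2 : lam A ^ l.length * Order.succ (Ordinal.typein (· < ·) a) ≤
          lam A ^ l.length * lam A :=
        mul_le_mul_right (Order.succ_le_of_lt (Ordinal.typein_lt_type _ a)) _
      calc g (a :: l) < lam A ^ l.length * lam A := h1.trans_le h2
        _ = lam A ^ (a :: l).length := by rw [List.length_cons, pow_succ]

theorem g_mono : ∀ s t : List A, s.length = t.length → List.Lex (· < ·) s t → g s < g t := by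
  intro s t hlen hlex
  induction hlex with
  | nil => simp at hlen
  | @rel a l₁ b l₂ hab =>
      simp only [List.length_cons, add_left_inj] at hlen
      have h1 : g (a :: l₁) < lam A ^ l₁.length * Order.succ (Ordinal.typein (· < ·) a) := by
        rw [Ordinal.mul_succ, g]
        exact add_lt_add_right (g_lt l₁) _
      have h2 : lam A ^ l₁.length * Order.succ (Ordinal.typein (· < ·) a) ≤
          lam A ^ l₂.length * Ordinal.typein (· < ·) b := by
        rw [hlen]
        exact mul_le_mul_right
          (Order.succ_le_of_lt ((Ordinal.typein_lt_typein _).2 hab)) _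
      refine h1.trans_le (h2.trans ?_)
      exact le_self_add
  | @cons a l₁ l₂ h ih =>
      simp only [List.length_cons, add_left_inj] at hlen
      have := ih hlen
      simp only [g, hlen]
      exact add_lt_add_right this _

theorem two_le_lam (hl : 2 ≤ lam A) : True := trivial

theorem pow_le_pow_exp (hl : 2 ≤ lam A) {m k : ℕ} (h : m ≤ k) :
    lam A ^ m ≤ lam A ^ k := by
  rw [← Ordinal.opow_natCast, ← Ordinal.opow_natCast]
  exact Ordinal.opow_le_opow_right (lt_of_lt_of_le (by norm_num) hl) (by exact_mod_cast h)

noncomputable def f (l : List A) : Ordinal := lam A ^ l.length + g l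

theorem f_lt_pow_succ (hl : 2 ≤ lam A) (l : List A) :
    f l < lam A ^ (l.length + 1) := by
  have h1 : f l < lam A ^ l.length + lam A ^ l.length :=
    add_lt_add_right (g_lt l) _
  have h2 : lam A ^ l.length + lam A ^ l.length = lam A ^ l.length * 2 := by
    have : (2 : Ordinal) = Order.succ 1 := by simp [one_add_one_eq_two]
    rw [this, Ordinal.mul_succ, mul_one]
  have h3 : lam A ^ l.length * 2 ≤ lam A ^ l.length * lam A := mul_le_mul_right hl _
  rw [h2] at h1
  refine h1.trans_le (h3.trans_eq ?_)
  rw [pow_succ]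

theorem f_strictMono (hl : 2 ≤ lam A) {s t : List A}
    (h : s.length < t.length ∨ (s.length = t.length ∧ List.Lex (· < ·) s t)) :
    f s < f t := by
  rcases h with h | ⟨h1, h2⟩
  · have : f s < lam A ^ (s.length + 1) := f_lt_pow_succ hl s
    refine this.trans_le ?_
    refine (pow_le_pow_exp hl h).trans ?_
    exact le_self_add
  · have := g_mono s t h1 h2
    unfold f
    rw [h1]
    exact add_lt_add_right this _

theorem f_lt (hl : 2 ≤ lam A) (l : List A) : f l < lam A ^ (omega0 : Ordinal) := by
  refine (f_lt_pow_succ hl l).trans_le ?_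
  rw [← Ordinal.opow_natCast]
  exact Ordinal.opow_le_opow_right (lt_of_lt_of_le (by norm_num) hl)
    (le_of_lt (Ordinal.nat_lt_omega0 _))

abbrev slex : List A → List A → Prop := fun s t =>
  s.length < t.length ∨ (s.length = t.length ∧ List.Lex (· < ·) s t)

theorem slex_trichotomous : ∀ s t : List A, slex s t ∨ s = t ∨ slex t s := by
  intro s t
  rcases lt_trichotomy s.length t.length with h | h | h
  · exact Or.inl (Or.inl h)
  · rcases trichotomous_of (List.Lex (· < ·)) s t with h2 | h2 | h2
    · exact Or.inl (Or.inr ⟨h, h2⟩)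
    · exact Or.inr (Or.inl h2)
    · exact Or.inr (Or.inr (Or.inr ⟨h.symm, h2⟩))
  · exact Or.inr (Or.inr (Or.inl h))

theorem slex_trans : ∀ s t u : List A, slex s t → slex t u → slex s u := by
  intro s t u h1 h2
  rcases h1 with h1 | ⟨h1, h1'⟩ <;> rcases h2 with h2 | ⟨h2, h2'⟩
  · exact Or.inl (h1.trans h2)
  · exact Or.inl (h2 ▸ h1)
  · exact Or.inl (h1 ▸ h2)
  · exact Or.inr ⟨h1.trans h2, List.lt_trans h1' h2'⟩

theorem slex_isWellOrder (hl : 2 ≤ lam A) : IsWellOrder (List A) (slex (A := A)) where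
  trichotomous := fun s t h1 h2 => by
    rcases slex_trichotomous s t with h | h | h
    · exact absurd h h1
    · exact h
    · exact absurd h h2
  wf := by
    have : Subrelation (slex (A := A)) (InvImage (· < ·) f) := by
      intro s t h
      exact f_strictMono hl h
    exact Subrelation.wf this (InvImage.wf f Ordinal.lt_wf)

theorem slex_iff_f_lt (hl : 2 ≤ lam A) (s t : List A) :
    f s < f t ↔ slex s t := by
  constructor
  · intro h
    rcases slex_trichotomous s t with h1 | h1 | h1
    · exact h1
    · subst h1; exact absurd h (lt_irrefl _)
    · exact absurd (f_strictMono hl h1) (asymm h)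
  · exact f_strictMono hl

/-- fixed-length lists -/
abbrev L (A : Type*) (n : ℕ) := { l : List A // l.length = n }

abbrev lexn (n : ℕ) : L A n → L A n → Prop := fun s t => List.Lex (· < ·) s.1 t.1

theorem lex_cons_iff {a b : A} {l₁ l₂ : List A} :
    List.Lex (· < ·) (a :: l₁) (b :: l₂) ↔ a < b ∨ a = b ∧ List.Lex (· < ·) l₁ l₂ := by
  constructor
  · intro h
    cases h with
    | rel h => exact Or.inl h
    | cons h => exact Or.inr ⟨rfl, h⟩
  · rintro (h | ⟨rfl, h⟩)
    · exact List.Lex.rel h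
    · exact List.Lex.cons h

noncomputable def consIso (n : ℕ) :
    Prod.Lex ((· < ·) : A → A → Prop) (lexn (A := A) n) ≃r lexn (A := A) (n + 1) where
  toFun := fun p => ⟨p.1 :: p.2.1, by simp [p.2.2]⟩
  invFun := fun l => match l with
    | ⟨[], h⟩ => absurd h (by simp)
    | ⟨a :: m, h⟩ => (a, ⟨m, by simpa using h⟩)
  left_inv := by rintro ⟨a, ⟨l, hl⟩⟩; rfl
  right_inv := by
    rintro ⟨(_ | ⟨a, m⟩), hx⟩
    · simp at hx
    · rfl
  map_rel_iff' := by
    rintro ⟨a, ⟨l₁, h₁⟩⟩ ⟨b, ⟨l₂, h₂⟩⟩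
    simp only [Equiv.coe_fn_mk, lexn, lex_cons_iff, Prod.lex_def]

instance lexn_wo : ∀ n, IsWellOrder (L A n) (lexn (A := A) n)
  | 0 => by
    have huniq : ∀ l : L A 0, l = ⟨[], rfl⟩ := by
      rintro ⟨l, hl⟩
      simp only [List.length_eq_zero_iff] at hl
      simp [hl]
    refine { trichotomous := ?_, wf := ?_ }
    · constructor
      intro a
      constructor
      intro b hb
      rw [huniq a] at hb
      exact absurd hb List.not_lex_nil
    · intro a b _ _; rw [huniq a, huniq b]
  | (n+1) => by
    have := lexn_wo n
    exact (consIso n).symm.toRelEmbedding.isWellOrder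

theorem type_lexn (n : ℕ) : Ordinal.type (lexn (A := A) n) = lam A ^ n := by
  induction n with
  | zero =>
      rw [pow_zero]
      have h1 : Subsingleton (L A 0) := by
        constructor
        rintro ⟨l₁, h₁⟩ ⟨l₂, h₂⟩
        simp only [List.length_eq_zero_iff] at h₁ h₂
        simp [h₁, h₂]
      have h2 : Nonempty (L A 0) := ⟨⟨[], rfl⟩⟩
      exact Ordinal.type_eq_one_of_unique _
  | succ n ih =>
      have hiso : Ordinal.type (lexn (A := A) (n+1)) =
          Ordinal.type (Prod.Lex ((· < ·) : A → A → Prop) (lexn (A := A) n)) :=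
        (Ordinal.type_eq.2 ⟨(consIso (A := A) n).symm⟩)
      rw [hiso, Ordinal.type_prod_lex, ih, pow_succ]

/-- embedding of fixed-length lex into shortlex -/
def lexnEmb (n : ℕ) : lexn (A := A) n ↪r slex (A := A) where
  toFun := Subtype.val
  inj' := Subtype.val_injective
  map_rel_iff' := by
    rintro ⟨l₁, h₁⟩ ⟨l₂, h₂⟩
    simp only [Function.Embedding.coeFn_mk, slex, lexn, h₁, h₂, lt_irrefl, false_or,
      true_and]

theorem f_reflects (hl : 2 ≤ lam A) {s t : List A} (h : f s < f t) : slex (A := A) s t := by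
  rcases slex_trichotomous s t with h1 | h1 | h1
  · exact h1
  · subst h1; exact absurd h (lt_irrefl _)
  · exact absurd (f_strictMono hl h1) (asymm h)

end Stmt16Aux

theorem stmt16 {A : Type*} [LinearOrder A] [IsWellOrder A (· < ·)]
    (hl : 2 ≤ Ordinal.type ((· < ·) : A → A → Prop)) :
    ∃ h : IsWellOrder (List A)
        (fun s t => s.length < t.length ∨
          (s.length = t.length ∧ List.Lex (· < ·) s t)),
      @Ordinal.type (List A)
          (fun s t => s.length < t.length ∨
            (s.length = t.length ∧ List.Lex (· < ·) s t)) h =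
        Ordinal.type ((· < ·) : A → A → Prop) ^ (Ordinal.omega0 : Ordinal) := by
  classical
  have hl' : 2 ≤ Stmt16Aux.lam A := hl
  have h := Stmt16Aux.slex_isWellOrder hl'
  refine ⟨h, le_antisymm ?_ ?_⟩
  · -- upper bound via f
    haveI : IsWellOrder (Stmt16Aux.lam A ^ (Ordinal.omega0 : Ordinal)).ToType
        ((· < ·) : (Stmt16Aux.lam A ^ (Ordinal.omega0 : Ordinal)).ToType →
          (Stmt16Aux.lam A ^ (Ordinal.omega0 : Ordinal)).ToType → Prop) := isWellOrder_lt
    have emb : Stmt16Aux.slex (A := A) ↪r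
        ((· < ·) : (Stmt16Aux.lam A ^ (Ordinal.omega0 : Ordinal)).ToType →
          (Stmt16Aux.lam A ^ (Ordinal.omega0 : Ordinal)).ToType → Prop) := by
      refine ⟨⟨fun l => Ordinal.enum (· < ·)
        ⟨Stmt16Aux.f l, by
          rw [Ordinal.type_toType]; exact Stmt16Aux.f_lt hl' l⟩, ?_⟩, ?_⟩
      · intro s t hst
        have h2 : Stmt16Aux.f s = Stmt16Aux.f t := by
          have := congrArg (Ordinal.typein ((· < ·) :
            (Stmt16Aux.lam A ^ (Ordinal.omega0 : Ordinal)).ToType → _ → Prop)) hst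
          erw [Ordinal.typein_enum, Ordinal.typein_enum] at this
          exact this
        rcases Stmt16Aux.slex_trichotomous (A := A) s t with h1 | h1 | h1
        · exact absurd (Stmt16Aux.f_strictMono hl' h1) (h2 ▸ lt_irrefl _)
        · exact h1
        · exact absurd (Stmt16Aux.f_strictMono hl' h1) (h2 ▸ lt_irrefl _)
      · intro s t
        constructor
        · intro hst
          have h2 := (Ordinal.enum_lt_enum (r := ((· < ·) :
            (Stmt16Aux.lam A ^ (Ordinal.omega0 : Ordinal)).ToType → _ → Prop))).1 hst
          exact Stmt16Aux.f_reflects hl' (by exact_mod_cast h2)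
        · intro hst
          exact (Ordinal.enum_lt_enum (r := ((· < ·) :
            (Stmt16Aux.lam A ^ (Ordinal.omega0 : Ordinal)).ToType → _ → Prop))).2
            (by exact_mod_cast Stmt16Aux.f_strictMono hl' hst)
    have := Ordinal.type_le_iff'.2 ⟨emb⟩
    rwa [Ordinal.type_toType] at this
  · -- lower bound
    have hne : Stmt16Aux.lam A ≠ 0 := by
      intro h0; rw [h0] at hl'; exact absurd hl' (by norm_num)
    rw [Ordinal.opow_le_of_isSuccLimit hne Ordinal.isSuccLimit_omega0]
    intro c hc
    obtain ⟨n, rfl⟩ := Ordinal.lt_omega0.1 hc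
    rw [Ordinal.opow_natCast, ← Stmt16Aux.type_lexn (A := A) n]
    exact Ordinal.type_le_iff'.2 ⟨Stmt16Aux.lexnEmb n⟩
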